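/- Under M2 (σ^{bd}(σ_{ad,α} + g_{ad,α}) = 2g^{bd}g_{ad,α}), the expression E_{αβ} = (g_{de,α} + σ_{de,α})τ^d_γ τ^e_β − σ_{ah}τ^h_β g^{ea}g_{fe,α}τ^f_γ − σ_{de}τ^d_γ g^{fe}g_{hf,α}τ^h_β vanishes identically, for any matrix τ^a_α. -/
import Mathlib
open Matrix

private lemma sum_comm3' {p : ℕ} (f : Fin p → Fin p → Fin p → ℝ) :
    (∑ a, ∑ b, ∑ c, f a b c) = ∑ c, ∑ b, ∑ a, f a b c := by
  rw [Finset.sum_comm]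
  have : (∑ b, ∑ a, ∑ c, f a b c) = ∑ b, ∑ c, ∑ a, f a b c :=
    Finset.sum_congr rfl fun b _ => Finset.sum_comm
  rw [this, Finset.sum_comm]

theorem stmt_18 (p : ℕ) (g σ ginv σinv Dg Dσ : Matrix (Fin p) (Fin p) ℝ)
    (hgs : g.IsSymm) (hσs : σ.IsSymm) (hDgs : Dg.IsSymm) (hDσs : Dσ.IsSymm)
    (hg : g * ginv = 1) (hg' : ginv * g = 1)
    (hσ : σ * σinv = 1) (hσ' : σinv * σ = 1)
    (hM2 : ∀ a b, ∑ d, σinv b d * (Dσ a d + Dg a d) = 2 * ∑ d, ginv b d * Dg a d) :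
    ∀ u v : Fin p → ℝ,
      (∑ d, ∑ e, (Dg d e + Dσ d e) * u d * v e)
        - (∑ a, ∑ h, ∑ e, ∑ f, σ a h * v h * ginv e a * Dg f e * u f)
        - (∑ d, ∑ e, ∑ f, ∑ h, σ d e * u d * ginv f e * Dg h f * v h) = 0 := by
  intro u v
  -- inverses of symmetric matrices are symmetric
  have hginvs : ginvᵀ = ginv := by
    have h1 : g * ginvᵀ = 1 := by
      have := congrArg Matrix.transpose hg'
      simpa [Matrix.transpose_mul, hgs.eq] using this
    calc ginvᵀ = (ginv * g) * ginvᵀ := by rw [hg', Matrix.one_mul]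
    _ = ginv * (g * ginvᵀ) := by rw [Matrix.mul_assoc]
    _ = ginv := by rw [h1, Matrix.mul_one]
  -- matrix form of M2
  have hM2' : σinv * (Dσ + Dg) = 2 • (ginv * Dg) := by
    ext b a
    have h := hM2 a b
    have l : ∀ d, Dσ a d + Dg a d = Dσ d a + Dg d a := by
      intro d; rw [← hDσs.apply, ← hDgs.apply]
    simp only [l] at h
    have r : ∀ d, ginv b d * Dg a d = ginv b d * Dg d a := by
      intro d; rw [← hDgs.apply]
    simp only [r] at h
    simpa [Matrix.mul_apply, Matrix.add_apply, Matrix.smul_apply, Finset.mul_sum] using h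
  have key : Dσ + Dg = 2 • (σ * ginv * Dg) := by
    calc Dσ + Dg = σ * (σinv * (Dσ + Dg)) := by
          rw [← Matrix.mul_assoc, hσ, Matrix.one_mul]
    _ = σ * (2 • (ginv * Dg)) := by rw [hM2']
    _ = 2 • (σ * ginv * Dg) := by rw [Matrix.mul_smul, Matrix.mul_assoc]
  have symM : Dg * ginv * σ = σ * ginv * Dg := by
    have ht : (σ * ginv * Dg)ᵀ = Dg * ginv * σ := by
      rw [Matrix.transpose_mul, Matrix.transpose_mul, hginvs, hDgs.eq, hσs.eq,
        Matrix.mul_assoc]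
    have hsym : (σ * ginv * Dg)ᵀ = σ * ginv * Dg := by
      have := congrArg Matrix.transpose key
      rw [Matrix.transpose_add, hDσs.eq, hDgs.eq, Matrix.transpose_smul] at this
      have h2 : (2 : ℕ) • (σ * ginv * Dg)ᵀ = 2 • (σ * ginv * Dg) := by
        rw [← this, key]
      ext i j
      have := congrFun (congrFun h2 i) j
      simp only [Matrix.smul_apply, smul_eq_mul, nsmul_eq_mul, Nat.cast_ofNat] at this
      linarith
    rw [← ht, hsym]
  -- rewrite the three terms
  have hT1 : (∑ d, ∑ e, (Dg d e + Dσ d e) * u d * v e)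
      = ∑ d, ∑ e, (2 • (σ * ginv * Dg)) d e * u d * v e := by
    rw [← key]
    exact Finset.sum_congr rfl fun d _ => Finset.sum_congr rfl fun e _ => by
      rw [Matrix.add_apply]; ring
  have hT2 : (∑ a, ∑ h, ∑ e, ∑ f, σ a h * v h * ginv e a * Dg f e * u f)
      = ∑ d, ∑ e, (σ * ginv * Dg) d e * u d * v e := by
    rw [← symM]
    -- RHS expand
    have rhs : (∑ d, ∑ e, (Dg * ginv * σ) d e * u d * v e)
        = ∑ d, ∑ e, ∑ j, ∑ k, Dg d k * ginv k j * σ j e * u d * v e := by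
      refine Finset.sum_congr rfl fun d _ => Finset.sum_congr rfl fun e _ => ?_
      simp [Matrix.mul_apply, Finset.sum_mul, Finset.mul_sum]
    rw [rhs]
    -- LHS order (a,h,e,f); target order (f,h,a,e) with renaming d=f, j=a, k=e
    -- step 1: swap inner (e,f): (a,h,e,f) → (a,h,f,e)
    have s1 : (∑ a, ∑ h, ∑ e, ∑ f, σ a h * v h * ginv e a * Dg f e * u f)
        = ∑ a, ∑ h, ∑ f, ∑ e, σ a h * v h * ginv e a * Dg f e * u f :=
      Finset.sum_congr rfl fun a _ => Finset.sum_congr rfl fun h _ => Finset.sum_comm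
    rw [s1]
    -- step 2: rotate outer three (a,h,f) → (f,h,a)
    rw [sum_comm3' (fun a h f => ∑ e, σ a h * v h * ginv e a * Dg f e * u f)]
    exact Finset.sum_congr rfl fun f _ => Finset.sum_congr rfl fun h _ =>
      Finset.sum_congr rfl fun a _ => Finset.sum_congr rfl fun e _ => by ring
  have hT3 : (∑ d, ∑ e, ∑ f, ∑ h, σ d e * u d * ginv f e * Dg h f * v h)
      = ∑ d, ∑ e, (σ * ginv * Dg) d e * u d * v e := by
    have rhs : (∑ d, ∑ e, (σ * ginv * Dg) d e * u d * v e)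
        = ∑ d, ∑ e, ∑ j, ∑ k, σ d j * ginv j k * Dg k e * u d * v e := by
      refine Finset.sum_congr rfl fun d _ => Finset.sum_congr rfl fun e _ => ?_
      simp only [Matrix.mul_apply, Finset.sum_mul]
      exact Finset.sum_comm
    rw [rhs]
    -- LHS order (d,e,f,h); target (d,h,e,f) with j=e, k=f
    refine Finset.sum_congr rfl fun d _ => ?_
    -- inner three: (e,f,h) → (h,e,f)
    have s1 : (∑ e, ∑ f, ∑ h, σ d e * u d * ginv f e * Dg h f * v h)
        = ∑ h, ∑ f, ∑ e, σ d e * u d * ginv f e * Dg h f * v h :=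
      sum_comm3' _
    rw [s1]
    refine Finset.sum_congr rfl fun h _ => ?_
    rw [Finset.sum_comm]
    refine Finset.sum_congr rfl fun e _ => Finset.sum_congr rfl fun f _ => ?_
    have hge' : ginv f e = ginv e f := by
      have := congrFun (congrFun hginvs e) f
      simpa [Matrix.transpose_apply] using this
    have hdg : Dg h f = Dg f h := by
      have := congrFun (congrFun hDgs f) h
      simpa using this
    rw [hge', hdg]; ring
  rw [hT1, hT2, hT3, ← Finset.sum_sub_distrib, ← Finset.sum_sub_distrib]
  refine Finset.sum_eq_zero fun d _ => ?_
  rw [← Finset.sum_sub_distrib, ← Finset.sum_sub_distrib]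
  refine Finset.sum_eq_zero fun e _ => ?_
  simp only [Matrix.smul_apply, smul_eq_mul, nsmul_eq_mul, Nat.cast_ofNat]
  ring
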